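/- Let R be an artinian local ring with finite residue field, and let 0 → M → N → L → 0 be a short exact sequence of R-modules with a locally finite R-linear operator T acting equivariantly on all three. Then the induced sequence 0 → e(T)M → e(T)N → e(T)L → 0 is exact, where e(T) is the associated ordinary idempotent. -/
import Mathlib

section aux

variable {R : Type*} [CommRing R]

private lemma auxPow {X Y : Type*} [AddCommGroup X] [Module R X] [AddCommGroup Y] [Module R Y]
    (f : X →ₗ[R] Y) (TX : Module.End R X) (TY : Module.End R Y)
    (hfT : f ∘ₗ TX = TY ∘ₗ f) : ∀ (k : ℕ) (x : X), f ((TX ^ k) x) = (TY ^ k) (f x) := by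
  intro k
  induction k with
  | zero => intro x; simp
  | succ n ih =>
    intro x
    have h1 : ∀ z, f (TX z) = TY (f z) := fun z => LinearMap.congr_fun hfT z
    rw [pow_succ, pow_succ, Module.End.mul_apply, Module.End.mul_apply, ih, h1]

private lemma auxTorsionZero {Z : Type*} [AddCommGroup Z] [Module R Z]
    (TZ eZ : Module.End R Z)
    (hb : Set.BijOn TZ (LinearMap.range eZ : Set Z) (LinearMap.range eZ : Set Z))
    {k : ℕ} : ∀ {z : Z}, z ∈ LinearMap.range eZ → (TZ ^ k) z = 0 → z = 0 := by
  induction k with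
  | zero => intro z _ h; simpa using h
  | succ n ih =>
    intro z hz h
    have h1 : (TZ ^ n) (TZ z) = 0 := by
      rw [← Module.End.mul_apply, ← pow_succ]; exact h
    have hTz : TZ z ∈ LinearMap.range eZ := hb.mapsTo hz
    have h2 : TZ z = 0 := ih hTz h1
    have h0 : (0 : Z) ∈ (LinearMap.range eZ : Set Z) := (LinearMap.range eZ).zero_mem
    exact hb.injOn hz h0 (by rw [h2, map_zero])

private lemma auxUniformAux {Z : Type*} [AddCommGroup Z] [Module R Z]
    (TZ : Module.End R Z) {k K : ℕ} (hkK : k ≤ K) {z : Z} (h : (TZ ^ k) z = 0) :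
    (TZ ^ K) z = 0 := by
  rw [← Nat.sub_add_cancel hkK, pow_add, Module.End.mul_apply, h, map_zero]

private lemma auxUniformFinset {Z : Type*} [AddCommGroup Z] [Module R Z]
    (TZ : Module.End R Z) (S : Finset Z) (h : ∀ s ∈ S, ∃ k : ℕ, (TZ ^ k) s = 0) :
    ∃ K : ℕ, ∀ s ∈ S, (TZ ^ K) s = 0 := by
  classical
  induction S using Finset.induction with
  | empty => exact ⟨0, fun s hs => absurd hs (Finset.notMem_empty s)⟩
  | @insert a S' _ ih =>
    obtain ⟨K₁, hK₁⟩ := ih (fun s hs => h s (Finset.mem_insert_of_mem hs))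
    obtain ⟨k, hk⟩ := h a (Finset.mem_insert_self a S')
    refine ⟨max k K₁, fun s hs => ?_⟩
    rcases Finset.mem_insert.mp hs with rfl | hs'
    · exact auxUniformAux TZ (le_max_left _ _) hk
    · exact auxUniformAux TZ (le_max_right _ _) (hK₁ s hs')

private lemma auxUniform {Z : Type*} [AddCommGroup Z] [Module R Z]
    (TZ : Module.End R Z) (W : Submodule R Z) (hW : W.FG)
    (h : ∀ w ∈ W, ∃ k : ℕ, (TZ ^ k) w = 0) : ∃ K : ℕ, ∀ w ∈ W, (TZ ^ K) w = 0 := by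
  classical
  obtain ⟨S, hS⟩ := hW
  have hSm : ∀ s ∈ S, ∃ k, (TZ ^ k) s = 0 := fun s hs => h s (hS ▸ Submodule.subset_span hs)
  obtain ⟨K, hK⟩ := auxUniformFinset TZ S hSm
  refine ⟨K, fun w hw => ?_⟩
  have hle : W ≤ LinearMap.ker (TZ ^ K) := by
    rw [← hS, Submodule.span_le]
    intro s hs
    exact hK s hs
  exact hle hw

private lemma auxTransport [IsArtinianRing R]
    {X Y : Type*} [AddCommGroup X] [Module R X] [AddCommGroup Y] [Module R Y]
    (f : X →ₗ[R] Y) (TX : Module.End R X) (TY : Module.End R Y)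
    (hfT : f ∘ₗ TX = TY ∘ₗ f)
    (hX : ∀ x : X, ∃ P : Submodule R X, P.FG ∧ P.map TX ≤ P ∧ x ∈ P)
    (eX : Module.End R X) (eY : Module.End R Y)
    (hcY : eY * TY = TY * eY)
    (hbX : Set.BijOn TX (LinearMap.range eX : Set X) (LinearMap.range eX : Set X))
    (hnY : ∀ y ∈ LinearMap.range (1 - eY), ∃ k : ℕ, (TY ^ k) y = 0)
    {x : X} (hx : x ∈ LinearMap.range eX) : f x ∈ LinearMap.range eY := by
  obtain ⟨P, hPfg, hPstab, hxP⟩ := hX x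
  set Q : Submodule R X := P ⊓ LinearMap.range eX with hQ
  have hQstab : ∀ z ∈ Q, TX z ∈ Q := by
    intro z hz
    exact ⟨hPstab (Submodule.mem_map_of_mem hz.1), hbX.mapsTo hz.2⟩
  let g : Q →ₗ[R] Q := TX.restrict hQstab
  have ginj : Function.Injective g := by
    intro a b hab
    have : TX a.1 = TX b.1 := by
      have := congrArg Subtype.val hab
      simpa [g, LinearMap.restrict_apply] using this
    exact Subtype.ext (hbX.injOn a.2.2 b.2.2 this)
  haveI : IsArtinian R P := isArtinian_of_fg_of_artinian P hPfg
  haveI : IsArtinian R Q := isArtinian_of_le inf_le_left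
  have gsurj : Function.Surjective g := IsArtinian.surjective_of_injective_endomorphism g ginj
  have div : ∀ k : ℕ, ∃ q ∈ Q, (TX ^ k) q = x := by
    intro k
    induction k with
    | zero => exact ⟨x, ⟨hxP, hx⟩, by simp⟩
    | succ n ih =>
      obtain ⟨q, hq, hqx⟩ := ih
      obtain ⟨q', hq'⟩ := gsurj ⟨q, hq⟩
      have hq'val : TX q'.1 = q := by
        have := congrArg Subtype.val hq'
        simpa [g, LinearMap.restrict_apply] using this
      refine ⟨q'.1, q'.2, ?_⟩
      rw [pow_succ, Module.End.mul_apply, hq'val, hqx]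
  set W : Submodule R Y := (P.map f).map (1 - eY) with hW
  have hWfg : W.FG := (hPfg.map f).map _
  have hWtors : ∀ w ∈ W, ∃ k : ℕ, (TY ^ k) w = 0 := by
    intro w hw
    obtain ⟨v, _, rfl⟩ := hw
    exact hnY _ ⟨v, rfl⟩
  obtain ⟨K, hK⟩ := auxUniform TY W hWfg hWtors
  obtain ⟨q, hq, hqx⟩ := div K
  have hfx : f x = (TY ^ K) (f q) := by rw [← hqx, auxPow f TX TY hfT]
  have hcomm : Commute (1 - eY) (TY ^ K) :=
    (((Commute.one_left TY).sub_left hcY)).pow_right K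
  have hmem : (1 - eY) (f q) ∈ W := Submodule.mem_map_of_mem (Submodule.mem_map_of_mem hq.1)
  have hzero : (1 - eY) (f x) = 0 := by
    rw [hfx, ← Module.End.mul_apply, hcomm.eq, Module.End.mul_apply, hK _ hmem]
  have : eY (f x) = f x := by
    have := hzero
    rw [LinearMap.sub_apply, Module.End.one_apply, sub_eq_zero] at this
    exact this.symm
  exact ⟨f x, this⟩

end aux

/-- Let `0 → M → N → L → 0` be a short exact sequence of `R`-modules over an
artinian local ring `R` with finite residue field, with a locally finite operator
`T` acting equivariantly on all three.  Let `eM`, `eN`, `eL` be the associated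
ordinary idempotents `e(T)` (characterized by: idempotent, commuting with `T`,
`T` bijective on the image of `e`, and `T` locally nilpotent on the image of
`1 - e`).  Then `0 → e(T)M → e(T)N → e(T)L → 0` is exact. -/
theorem statement5 (R : Type*) [CommRing R] [IsArtinianRing R] [IsLocalRing R]
    [Finite (IsLocalRing.ResidueField R)]
    (M N L : Type*) [AddCommGroup M] [Module R M] [AddCommGroup N] [Module R N]
    [AddCommGroup L] [Module R L]
    (i : M →ₗ[R] N) (s : N →ₗ[R] L)
    (hi : Function.Injective i) (hs : Function.Surjective s)
    (hexact : LinearMap.range i = LinearMap.ker s)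
    (TM : Module.End R M) (TN : Module.End R N) (TL : Module.End R L)
    (hiT : i ∘ₗ TM = TN ∘ₗ i) (hsT : s ∘ₗ TN = TL ∘ₗ s)
    -- local finiteness of T on M, N and L:
    (hM : ∀ m : M, ∃ P : Submodule R M, P.FG ∧ P.map TM ≤ P ∧ m ∈ P)
    (hN : ∀ n : N, ∃ P : Submodule R N, P.FG ∧ P.map TN ≤ P ∧ n ∈ P)
    (hL : ∀ l : L, ∃ P : Submodule R L, P.FG ∧ P.map TL ≤ P ∧ l ∈ P)
    -- the ordinary projectors e(T) on M, N and L: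
    (eM : Module.End R M) (eN : Module.End R N) (eL : Module.End R L)
    (heM : IsIdempotentElem eM) (heN : IsIdempotentElem eN) (heL : IsIdempotentElem eL)
    (hcM : eM * TM = TM * eM) (hcN : eN * TN = TN * eN) (hcL : eL * TL = TL * eL)
    (hbM : Set.BijOn TM (LinearMap.range eM : Set M) (LinearMap.range eM : Set M))
    (hbN : Set.BijOn TN (LinearMap.range eN : Set N) (LinearMap.range eN : Set N))
    (hbL : Set.BijOn TL (LinearMap.range eL : Set L) (LinearMap.range eL : Set L))
    (hnM : ∀ m ∈ LinearMap.range (1 - eM), ∃ k : ℕ, (TM ^ k) m = 0)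
    (hnN : ∀ n ∈ LinearMap.range (1 - eN), ∃ k : ℕ, (TN ^ k) n = 0)
    (hnL : ∀ l ∈ LinearMap.range (1 - eL), ∃ k : ℕ, (TL ^ k) l = 0) :
    -- exactness of 0 → e(T)M → e(T)N → e(T)L → 0
    (∀ m ∈ LinearMap.range eM, i m ∈ LinearMap.range eN) ∧
    (i '' (LinearMap.range eM : Set M) =
      {n : N | n ∈ LinearMap.range eN ∧ s n = 0}) ∧
    (s '' (LinearMap.range eN : Set N) = (LinearMap.range eL : Set L)) := by
  have key1 : ∀ m ∈ LinearMap.range eM, i m ∈ LinearMap.range eN := fun m hm =>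
    auxTransport i TM TN hiT hM eM eN hcN hbM hnN hm
  have key3 : ∀ n ∈ LinearMap.range eN, s n ∈ LinearMap.range eL := fun n hn =>
    auxTransport s TN TL hsT hN eN eL hcL hbN hnL hn
  refine ⟨key1, ?_, ?_⟩
  · apply Set.Subset.antisymm
    · rintro _ ⟨m, hm, rfl⟩
      refine ⟨key1 m hm, ?_⟩
      have : i m ∈ LinearMap.ker s := hexact ▸ LinearMap.mem_range_self i m
      exact this
    · rintro n ⟨hn, hsn⟩
      have hker : n ∈ LinearMap.range i := by rw [hexact]; exact hsn
      obtain ⟨m₀, rfl⟩ := hker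
      obtain ⟨k, hk⟩ := hnM (m₀ - eM m₀) ⟨m₀, by simp⟩
      have hd : (TN ^ k) (i m₀ - i (eM m₀)) = 0 := by
        rw [← map_sub, ← auxPow i TM TN hiT, hk, map_zero]
      have hdm : i m₀ - i (eM m₀) ∈ LinearMap.range eN :=
        sub_mem hn (key1 _ ⟨m₀, rfl⟩)
      have := auxTorsionZero TN eN hbN hdm hd
      have heq : i (eM m₀) = i m₀ := by
        rw [sub_eq_zero] at this; exact this.symm
      exact ⟨eM m₀, ⟨m₀, rfl⟩, heq⟩
  · apply Set.Subset.antisymm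
    · rintro _ ⟨n, hn, rfl⟩
      exact key3 n hn
    · intro l hl
      obtain ⟨n₀, rfl⟩ := hs l
      obtain ⟨k, hk⟩ := hnN (n₀ - eN n₀) ⟨n₀, by simp⟩
      have hd : (TL ^ k) (s n₀ - s (eN n₀)) = 0 := by
        rw [← map_sub, ← auxPow s TN TL hsT, hk, map_zero]
      have hdm : s n₀ - s (eN n₀) ∈ LinearMap.range eL :=
        sub_mem hl (key3 _ ⟨n₀, rfl⟩)
      have := auxTorsionZero TL eL hbL hdm hd
      have heq : s (eN n₀) = s n₀ := by
        rw [sub_eq_zero] at this; exact this.symm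
      exact ⟨eN n₀, ⟨n₀, rfl⟩, heq⟩
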